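/- Let M be the incidence matrix of the substitution ω on the 19 Wang tiles of U and φ = (1+√5)/2. The vector v = (1, 3φ³, φ², φ³, φ, φ², φ⁴, φ³, φ⁴, 2φ³, φ², φ³, φ, φ⁴, φ⁴+φ², φ³, φ⁴, φ³, φ²)ᵗ satisfies M v = φ² v, and the row vector w = (1, 1, φ, φ, φ, φ, φ, φ, φ, φ, φ, φ, φ², φ², φ², φ², φ², φ², φ²) satisfies w M = φ² w. -/

import Mathlib

/-- Lists of the tiles occurring in the image `ω(u_j)` of each tile of `U`
under the substitution `ω = α∘β∘γ`. -/
def im : Fin 19 → List (Fin 19) :=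
  ![[17], [16], [15, 11], [13, 9], [17, 8], [16, 8], [15, 8], [14, 8],
    [14, 6], [17, 3], [16, 3], [14, 2], [15, 7, 11, 1], [14, 6, 11, 1],
    [13, 7, 9, 1], [12, 6, 9, 1], [18, 5, 10, 1], [13, 4, 9, 1],
    [14, 2, 8, 0]]

/-- The incidence matrix of `ω` over `ℝ`. -/
noncomputable def Mmat : Matrix (Fin 19) (Fin 19) ℝ := fun i j => ((im j).count i : ℝ)

/-- The golden ratio. -/
noncomputable def φ : ℝ := (1 + Real.sqrt 5) / 2

/-- The right Perron eigenvector of `M`. -/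
noncomputable def vR : Fin 19 → ℝ :=
  ![1, 3 * φ ^ 3, φ ^ 2, φ ^ 3, φ, φ ^ 2, φ ^ 4, φ ^ 3, φ ^ 4, 2 * φ ^ 3,
    φ ^ 2, φ ^ 3, φ, φ ^ 4, φ ^ 4 + φ ^ 2, φ ^ 3, φ ^ 4, φ ^ 3, φ ^ 2]

/-- The left Perron eigenvector of `M`. -/
noncomputable def wL : Fin 19 → ℝ :=
  ![1, 1, φ, φ, φ, φ, φ, φ, φ, φ, φ, φ, φ ^ 2, φ ^ 2, φ ^ 2, φ ^ 2, φ ^ 2,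
    φ ^ 2, φ ^ 2]

set_option maxHeartbeats 4000000

/-- The vectors `v` and `w` are right and left eigenvectors of the incidence
matrix `M` for the eigenvalue `φ²`. -/
theorem Mmat_eigenvectors :
    Mmat.mulVec vR = φ ^ 2 • vR ∧ Matrix.vecMul wL Mmat = φ ^ 2 • wL := by
  have h2 : φ ^ 2 = φ + 1 := by
    have h5 : Real.sqrt 5 ^ 2 = 5 := Real.sq_sqrt (by norm_num)
    unfold φ; nlinarith [h5]
  have h3 : φ ^ 3 = 2 * φ + 1 := by nlinarith [h2]
  have h4 : φ ^ 4 = 3 * φ + 2 := by nlinarith [h2, h3]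
  have h5 : φ ^ 5 = 5 * φ + 3 := by nlinarith [h2, h4]
  have h6 : φ ^ 6 = 8 * φ + 5 := by nlinarith [h2, h5]
  constructor
  · funext i
    rw [Matrix.mulVec, dotProduct, Pi.smul_apply, smul_eq_mul]
    fin_cases i <;>
      · simp only [Mmat, im, vR, Fin.sum_univ_succ, Finset.univ_unique,
          Finset.sum_singleton, Matrix.cons_val_zero, Matrix.cons_val_succ]
        norm_num (config := { decide := true }) [List.count_cons, List.count_nil]
        try ring_nf
        try simp only [h6, h5, h4, h3, h2]
        try ring
  · funext j
    rw [Matrix.vecMul, dotProduct, Pi.smul_apply, smul_eq_mul]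
    fin_cases j <;>
      · simp only [Mmat, im, wL, Fin.sum_univ_succ, Finset.univ_unique,
          Finset.sum_singleton, Matrix.cons_val_zero, Matrix.cons_val_succ]
        norm_num (config := { decide := true }) [List.count_cons, List.count_nil]
        try ring_nf
        try simp only [h6, h5, h4, h3, h2]
        try ring
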